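/- arXiv:1807.10683 — 2 statements merged into one kernel-verified Lean document; each statement's English description precedes it below -/
import Mathlib

section
/- Let (H, m) be a primary monoid and n = Ĥ \ Ĥ^×. (1) If every element of n has a power lying in m, then Ĥ is primary. (2) If the conductor (H : Ĥ) ≠ ∅, then Ĥ is primary if and only if every element of n has a power lying in m. -/
open Pointwise

section MonoidDefs

variable {G : Type*} [CommGroup G]

/-- `x` is a unit of the submonoid `H`. -/
def IsHUnit (H : Submonoid G) (x : G) : Prop := x ∈ H ∧ x⁻¹ ∈ H

/-- The set of non-units of `H`. -/
def nonUnits (H : Submonoid G) : Set G := {x | x ∈ H ∧ x⁻¹ ∉ H}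

/-- `u` is an atom (irreducible element) of `H`. -/
def IsHAtom (H : Submonoid G) (u : G) : Prop :=
  u ∈ H ∧ ¬ IsHUnit H u ∧
    ∀ a b : G, a ∈ H → b ∈ H → u = a * b → IsHUnit H a ∨ IsHUnit H b

/-- `G` is the quotient group of `H`. -/
def IsQuotientGroup (H : Submonoid G) : Prop :=
  ∀ g : G, ∃ a ∈ H, ∃ b ∈ H, g = a / b

/-- `H` is a primary monoid. -/
def IsPrimaryMonoid (H : Submonoid G) : Prop :=
  (nonUnits H).Nonempty ∧
    ∀ a ∈ nonUnits H, ∀ b ∈ nonUnits H, ∃ n : ℕ, 0 < n ∧ b ^ n ∈ a • (H : Set G)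

/-- `H` is a strongly primary monoid. -/
def IsStronglyPrimary (H : Submonoid G) : Prop :=
  (nonUnits H).Nonempty ∧
    ∀ a ∈ nonUnits H, ∃ n : ℕ, 0 < n ∧ nonUnits H ^ n ⊆ a • (H : Set G)

/-- `x` and `y` are associated in `H`. -/
def HAssoc (H : Submonoid G) (x y : G) : Prop := IsHUnit H (x / y)

/-- The set of lengths of `a`: all `k` such that `a` is a product of `k` atoms
(up to a unit of `H`). -/
def lengthSet (H : Submonoid G) (a : G) : Set ℕ :=
  {k | ∃ s : Multiset G, Multiset.card s = k ∧ (∀ v ∈ s, IsHAtom H v) ∧ HAssoc H a s.prod}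

/-- `Λ(S)`, the supremum of the minimal factorization lengths of elements of `S`. -/
noncomputable def Lambda (H : Submonoid G) (S : Set G) : ℕ∞ :=
  ⨆ (a : G) (_ : a ∈ S) (_ : (lengthSet H a).Nonempty), ((sInf (lengthSet H a) : ℕ) : ℕ∞)

/-- `ρ_k(H)`, the supremum of `sup L(a)` over all `a` with `k ∈ L(a)`. -/
noncomputable def rho (H : Submonoid G) (k : ℕ∞) : ℕ∞ :=
  ⨆ (a : G) (_ : a ∈ H) (_ : ∃ n ∈ lengthSet H a, (n : ℕ∞) = k),
    ⨆ (n : ℕ) (_ : n ∈ lengthSet H a), (n : ℕ∞)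

/-- The elasticity `ρ(H) = sup { m/n : m, n ∈ L(a), a ∈ H }`. -/
noncomputable def elasticity (H : Submonoid G) : ENNReal :=
  ⨆ (a : G) (_ : a ∈ H) (m : ℕ) (_ : m ∈ lengthSet H a) (n : ℕ) (_ : n ∈ lengthSet H a),
    (m : ENNReal) / (n : ENNReal)

/-- `z` is a factorization of `a`: a multiset of atoms whose product is associated to `a`. -/
def IsFactorization (H : Submonoid G) (a : G) (z : Multiset G) : Prop :=
  (∀ v ∈ z, IsHAtom H v) ∧ HAssoc H a z.prod

/-- The distance between two factorizations: cancel a (maximal) common part (up to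
associates) and take the maximum of the lengths of the remaining parts. -/
noncomputable def fdist (H : Submonoid G) (z z' : Multiset G) : ℕ :=
  sInf {N : ℕ | ∃ x x' v w : Multiset G, z = x + v ∧ z' = x' + w ∧
    Multiset.Rel (HAssoc H) x x' ∧ max (Multiset.card v) (Multiset.card w) ≤ N}

/-- `N` is a tame bound for the atom `u`: for every multiple `a` of `u` and every
factorization `z` of `a` there is a factorization `z'` of `a` containing `u`
with `d(z, z') ≤ N`. -/
def TameBound (H : Submonoid G) (u : G) (N : ℕ) : Prop :=
  ∀ a ∈ H, (∃ b ∈ H, a = u * b) → ∀ z : Multiset G, IsFactorization H a z →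
    ∃ z' : Multiset G, IsFactorization H a z' ∧ (∃ v ∈ z', HAssoc H v u) ∧ fdist H z z' ≤ N

/-- `H` is locally tame: `t(u) < ∞` for every atom `u`. -/
def LocallyTame (H : Submonoid G) : Prop :=
  ∀ u : G, IsHAtom H u → ∃ N : ℕ, TameBound H u N

/-- `H` is globally tame: `sup { t(u) : u an atom } < ∞`. -/
def GloballyTame (H : Submonoid G) : Prop :=
  ∃ N : ℕ, ∀ u : G, IsHAtom H u → TameBound H u N

/-- The local tame degree `t(u)` of `u`. -/
noncomputable def tameDeg (H : Submonoid G) (u : G) : ℕ∞ :=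
  sInf {N : ℕ∞ | ∃ n : ℕ, TameBound H u n ∧ N = (n : ℕ∞)}

/-- `N` is an omega bound for `a`: whenever `a` divides a product of elements of `H`,
it divides a subproduct with at most `N` factors. -/
def OmegaBound (H : Submonoid G) (a : G) (N : ℕ) : Prop :=
  ∀ s : Multiset G, (∀ x ∈ s, x ∈ H) → (∃ c ∈ H, s.prod = a * c) →
    ∃ t : Multiset G, t ≤ s ∧ Multiset.card t ≤ N ∧ ∃ c ∈ H, t.prod = a * c

/-- The omega invariant `ω(a)`. -/
noncomputable def omegaDeg (H : Submonoid G) (a : G) : ℕ∞ :=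
  sInf {N : ℕ∞ | ∃ n : ℕ, OmegaBound H a n ∧ N = (n : ℕ∞)}

/-- `M(x)`: the smallest `n ≥ 1` with `mⁿ ⊆ xH`. -/
noncomputable def Mdeg (H : Submonoid G) (x : G) : ℕ :=
  sInf {n : ℕ | 0 < n ∧ nonUnits H ^ n ⊆ x • (H : Set G)}

/-- The complete integral closure `Ĥ` of `H` (inside the quotient group). -/
def hatH (H : Submonoid G) : Set G := {x | ∃ c ∈ H, ∀ n : ℕ, c * x ^ n ∈ H}

/-- The set of non-units of `Ĥ`. -/
def hatNonUnits (H : Submonoid G) : Set G := {x | x ∈ hatH H ∧ x⁻¹ ∉ hatH H}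

/-- The root closure `H̃` of `H`. -/
def tildeH (H : Submonoid G) : Set G := {x | ∃ n : ℕ, 0 < n ∧ x ^ n ∈ H}

/-- The set of non-units of `H̃`. -/
def tildeNonUnits (H : Submonoid G) : Set G := {x | x ∈ tildeH H ∧ x⁻¹ ∉ tildeH H}

/-- The seminormal closure `H'` of `H`. -/
def seminormalClosure (H : Submonoid G) : Set G :=
  {x | ∃ N : ℕ, ∀ n : ℕ, N ≤ n → x ^ n ∈ H}

/-- The conductor `(H : Ĥ)`. -/
def conductorH (H : Submonoid G) : Set G := {z | ∀ x ∈ hatH H, z * x ∈ H}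

/-- `Ĥ` is a primary monoid. -/
def HatPrimary (H : Submonoid G) : Prop :=
  (hatNonUnits H).Nonempty ∧
    ∀ a ∈ hatNonUnits H, ∀ b ∈ hatNonUnits H,
      ∃ n : ℕ, 0 < n ∧ ∃ c ∈ hatH H, b ^ n = a * c

/-- `Ĥ` is a valuation monoid. -/
def HatValuation (H : Submonoid G) : Prop :=
  ∀ a ∈ hatH H, ∀ b ∈ hatH H,
    (∃ c ∈ hatH H, b = a * c) ∨ (∃ c ∈ hatH H, a = b * c)

/-- `H` is atomic. -/
def Atomic (H : Submonoid G) : Prop :=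
  ∀ a ∈ nonUnits H, ∃ s : Multiset G, (∀ v ∈ s, IsHAtom H v) ∧ a = s.prod

/-- `H` is a discrete valuation monoid, i.e. `H_red ≅ (ℕ₀, +)`. -/
def IsDiscreteValuationMonoid (H : Submonoid G) : Prop :=
  ∃ p ∈ H, ¬ IsHUnit H p ∧ ∀ a ∈ H, ∃ n : ℕ, ∃ ε : G, IsHUnit H ε ∧ a = ε * p ^ n

end MonoidDefs


section Aux

variable {G : Type*} [CommGroup G] {H : Submonoid G}

lemma mem_hatH_of_mem {x : G} (hx : x ∈ H) : x ∈ hatH H :=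
  ⟨1, H.one_mem, fun n => by simpa using H.pow_mem hx n⟩

lemma hatH_mul {x y : G} (hx : x ∈ hatH H) (hy : y ∈ hatH H) : x * y ∈ hatH H := by
  obtain ⟨c, hc, hcx⟩ := hx
  obtain ⟨d, hd, hdy⟩ := hy
  exact ⟨c * d, H.mul_mem hc hd, fun n => by
    rw [mul_pow, mul_mul_mul_comm]; exact H.mul_mem (hcx n) (hdy n)⟩

lemma hatH_pow {x : G} (hx : x ∈ hatH H) (k : ℕ) : x ^ k ∈ hatH H := by
  obtain ⟨c, hc, hcx⟩ := hx
  exact ⟨c, hc, fun n => by rw [← pow_mul]; exact hcx (k * n)⟩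

lemma nonUnits_subset_hatNonUnits (hp : IsPrimaryMonoid H) :
    nonUnits H ⊆ hatNonUnits H := by
  intro a ha
  refine ⟨mem_hatH_of_mem ha.1, ?_⟩
  rintro ⟨c, hc, hcn⟩
  have hcm : c ∈ nonUnits H := by
    refine ⟨hc, fun hci => ha.2 ?_⟩
    have h1 : a⁻¹ = c⁻¹ * (c * a⁻¹ ^ 1) := by group
    rw [h1]; exact H.mul_mem hci (hcn 1)
  obtain ⟨n, hn, hmem⟩ := hp.2 c hcm a ha
  rw [Set.mem_smul_set] at hmem
  obtain ⟨h, hh, hch⟩ := hmem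
  rw [smul_eq_mul] at hch
  apply ha.2
  have key : a⁻¹ = h * (c * a⁻¹ ^ (n + 1)) := by
    rw [← mul_assoc, mul_comm h c, hch]; group
  rw [key]; exact H.mul_mem hh (hcn (n + 1))

end Aux

/-- Let `H` be a primary monoid and `n = Ĥ \\ Ĥ^×`. (1) If every
element of `n` has a power lying in `m`, then `Ĥ` is primary. (2) If the conductor
`(H : Ĥ)` is nonempty, then `Ĥ` is primary iff every element of `n` has a power
lying in `m`. -/
theorem stmt14 {G : Type*} [CommGroup G] (H : Submonoid G) (hq : IsQuotientGroup H)
    (hp : IsPrimaryMonoid H) :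
    ((∀ x ∈ hatNonUnits H, ∃ k : ℕ, 0 < k ∧ x ^ k ∈ nonUnits H) → HatPrimary H) ∧
    ((conductorH H).Nonempty →
      (HatPrimary H ↔ ∀ x ∈ hatNonUnits H, ∃ k : ℕ, 0 < k ∧ x ^ k ∈ nonUnits H)) := by
  have hsub := nonUnits_subset_hatNonUnits (H := H) hp
  have part1 : (∀ x ∈ hatNonUnits H, ∃ k : ℕ, 0 < k ∧ x ^ k ∈ nonUnits H) → HatPrimary H := by
    intro hyp
    refine ⟨(hp.1).imp (fun a ha => hsub ha), ?_⟩
    intro a ha b hb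
    obtain ⟨k, hk, hak⟩ := hyp a ha
    obtain ⟨l, hl, hbl⟩ := hyp b hb
    obtain ⟨n, hn, hmem⟩ := hp.2 _ hak _ hbl
    rw [Set.mem_smul_set] at hmem
    obtain ⟨h, hh, hch⟩ := hmem
    rw [smul_eq_mul] at hch
    obtain ⟨k, rfl⟩ : ∃ k', k = k' + 1 := ⟨k - 1, (Nat.succ_pred_eq_of_pos hk).symm⟩
    refine ⟨l * n, by positivity, a ^ k * h,
      hatH_mul (hatH_pow ha.1 k) (mem_hatH_of_mem hh), ?_⟩
    rw [pow_mul, ← hch, pow_succ', mul_assoc]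
  refine ⟨part1, fun ⟨f, hf⟩ => ⟨fun hpr x hx => ?_, part1⟩⟩
  have hfH : f ∈ H := by simpa using hf 1 (mem_hatH_of_mem H.one_mem)
  by_cases hfi : f⁻¹ ∈ H
  · have hxH : x ∈ H := by
      have h1 : x = f⁻¹ * (f * x) := by group
      rw [h1]; exact H.mul_mem hfi (hf x hx.1)
    exact ⟨1, one_pos, by
      rw [pow_one]; exact ⟨hxH, fun hxi => hx.2 (mem_hatH_of_mem hxi)⟩⟩
  · have hfn : f ∈ hatNonUnits H := hsub ⟨hfH, hfi⟩
    obtain ⟨N, hN, c, hc, hbc⟩ := hpr.2 f hfn x hx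
    refine ⟨N, hN, ?_, fun hinv => hx.2 ?_⟩
    · rw [hbc]; exact hf c hc
    · obtain ⟨N, rfl⟩ : ∃ N', N = N' + 1 := ⟨N - 1, (Nat.succ_pred_eq_of_pos hN).symm⟩
      have h1 : x⁻¹ = x ^ N * (x ^ (N + 1))⁻¹ := by group
      rw [h1]; exact hatH_mul (hatH_pow hx.1 N) (mem_hatH_of_mem hinv)
end

section
/- Let H be a strongly primary monoid and x ∈ q(H). Then M(x) < ∞ and Λ(H \ xH) < M(x); that is, every element of H not divisible by x (in q(H)) has a factorization into fewer than M(x) atoms. -/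
open Pointwise

section AuxLemmas

variable {G : Type*} [CommGroup G]

lemma pow_subset_H (H : Submonoid G) : ∀ k : ℕ, (nonUnits H) ^ k ⊆ (H : Set G) := by
  intro k
  induction k with
  | zero =>
    rw [pow_zero]
    intro z hz
    rw [Set.mem_one] at hz
    subst hz
    exact H.one_mem
  | succ n ih =>
    rw [pow_succ]
    rintro z ⟨p, hp, q, hq, rfl⟩
    exact H.mul_mem (ih hp) hq.1

lemma prod_mem_pow (H : Submonoid G) (s : Multiset G) (h : ∀ v ∈ s, v ∈ nonUnits H) :
    s.prod ∈ (nonUnits H) ^ (Multiset.card s) := by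
  induction s using Multiset.induction_on with
  | empty => simp [Set.mem_one]
  | cons a s ih =>
    rw [Multiset.prod_cons, Multiset.card_cons, pow_succ']
    exact Set.mul_mem_mul (h a (Multiset.mem_cons_self a s))
      (ih (fun v hv => h v (Multiset.mem_cons_of_mem hv)))

lemma mem_smul_coset {x z : G} {S : Set G} : z ∈ x • S ↔ ∃ h ∈ S, z = x * h := by
  constructor
  · rintro ⟨h, hh, rfl⟩
    exact ⟨h, hh, rfl⟩
  · rintro ⟨h, hh, rfl⟩
    exact ⟨h, hh, rfl⟩

lemma Mdeg_spec (H : Submonoid G) (hsp : IsStronglyPrimary H) {a : G} (ha : a ∈ nonUnits H) :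
    0 < Mdeg H a ∧ (nonUnits H) ^ (Mdeg H a) ⊆ a • (H : Set G) := by
  obtain ⟨n, hn, hsub⟩ := hsp.2 a ha
  have hne : {k : ℕ | 0 < k ∧ (nonUnits H) ^ k ⊆ a • (H : Set G)}.Nonempty := ⟨n, hn, hsub⟩
  exact Nat.sInf_mem hne

lemma Mdeg_lt (H : Submonoid G) (hsp : IsStronglyPrimary H) {b c : G}
    (hb : b ∈ nonUnits H) (hc : c ∈ nonUnits H) : Mdeg H b < Mdeg H (b * c) := by
  have ha : b * c ∈ nonUnits H := by
    refine ⟨H.mul_mem hb.1 hc.1, fun habs => hb.2 ?_⟩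
    have : b⁻¹ = c * (b * c)⁻¹ := by group
    rw [this]
    exact H.mul_mem hc.1 habs
  obtain ⟨hpos, hsub⟩ := Mdeg_spec H hsp ha
  set n := Mdeg H (b * c) with hn
  have hn2 : 2 ≤ n := by
    by_contra hlt
    have hn1 : n = 1 := by omega
    have hb1 : b ∈ (nonUnits H) ^ n := by rw [hn1, pow_one]; exact hb
    obtain ⟨h, hh, hbh⟩ := mem_smul_coset.mp (hsub hb1)
    apply hc.2
    have h1 : b * (c * h) = b * 1 := by rw [mul_one, ← mul_assoc, ← hbh]
    have h2 : c * h = 1 := mul_left_cancel h1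
    have : c⁻¹ = h := inv_eq_of_mul_eq_one_right h2
    rw [this]; exact hh
  have hmem : n - 1 ∈ {k : ℕ | 0 < k ∧ nonUnits H ^ k ⊆ b • (H : Set G)} := by
    refine ⟨by omega, ?_⟩
    intro z hz
    have hzc : z * c ∈ (nonUnits H) ^ n := by
      have : (nonUnits H) ^ (n - 1) * (nonUnits H) ^ 1 = (nonUnits H) ^ n := by
        rw [← pow_add]; congr 1; omega
      rw [← this]
      exact Set.mul_mem_mul hz (by rw [pow_one]; exact hc)
    obtain ⟨h, hh, hzch⟩ := mem_smul_coset.mp (hsub hzc)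
    refine mem_smul_coset.mpr ⟨h, hh, ?_⟩
    have : z * c = (b * h) * c := by rw [hzch, mul_right_comm]
    exact mul_right_cancel this
  have h2 : Mdeg H b ≤ n - 1 := Nat.sInf_le hmem
  omega

lemma strongly_primary_atomic (H : Submonoid G) (hsp : IsStronglyPrimary H) :
    ∀ n : ℕ, ∀ a ∈ nonUnits H, Mdeg H a = n →
      ∃ s : Multiset G, (∀ v ∈ s, IsHAtom H v) ∧ a = s.prod := by
  intro n
  induction n using Nat.strong_induction_on with
  | _ n ih =>
    intro a ha hM
    by_cases hA : IsHAtom H a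
    · exact ⟨{a}, by simpa using hA, by simp⟩
    · have hnu : ¬ IsHUnit H a := fun h => ha.2 h.2
      rw [IsHAtom] at hA
      push_neg at hA
      obtain ⟨b, c, hbH, hcH, habc, hub, huc⟩ := hA ha.1 hnu
      have hb : b ∈ nonUnits H := ⟨hbH, fun h => hub ⟨hbH, h⟩⟩
      have hc : c ∈ nonUnits H := ⟨hcH, fun h => huc ⟨hcH, h⟩⟩
      have hlb : Mdeg H b < n := by rw [← hM, habc]; exact Mdeg_lt H hsp hb hc
      have hlc : Mdeg H c < n := by
        rw [← hM, habc, mul_comm]; exact Mdeg_lt H hsp hc hb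
      obtain ⟨sb, hsb, hbe⟩ := ih _ hlb b hb rfl
      obtain ⟨sc, hsc, hce⟩ := ih _ hlc c hc rfl
      refine ⟨sb + sc, ?_, ?_⟩
      · intro v hv
        rcases Multiset.mem_add.mp hv with h | h
        · exact hsb v h
        · exact hsc v h
      · rw [Multiset.prod_add, habc, hbe, hce]

end AuxLemmas

/-- Let `H` be a strongly primary monoid and `x ∈ q(H)`. Then
`M(x) < ∞` and `Λ(H \\ xH) < M(x)`: every element of `H` not divisible by `x` has a
factorization into fewer than `M(x)` atoms. -/
theorem stmt15 {G : Type*} [CommGroup G] (H : Submonoid G) (hq : IsQuotientGroup H)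
    (hsp : IsStronglyPrimary H) (x : G) :
    (∃ n : ℕ, 0 < n ∧ nonUnits H ^ n ⊆ x • (H : Set G)) ∧
    Lambda H {a : G | a ∈ H ∧ a ∉ x • (H : Set G)} < ((Mdeg H x : ℕ) : ℕ∞) ∧
    ∀ a ∈ H, a ∉ x • (H : Set G) → ∃ k ∈ lengthSet H a, k < Mdeg H x := by
  -- Part 1: existence of n with mⁿ ⊆ xH
  have part1 : ∃ n : ℕ, 0 < n ∧ nonUnits H ^ n ⊆ x • (H : Set G) := by
    obtain ⟨a, haH, b, hbH, hx⟩ := hq x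
    by_cases ha' : a⁻¹ ∈ H
    · -- x⁻¹ ∈ H, so H ⊆ xH
      have hxinv : x⁻¹ ∈ H := by
        have : x⁻¹ = b * a⁻¹ := by rw [hx, inv_div, div_eq_mul_inv]
        rw [this]; exact H.mul_mem hbH ha'
      refine ⟨1, one_pos, ?_⟩
      intro z hz
      rw [pow_one] at hz
      exact mem_smul_coset.mpr ⟨x⁻¹ * z, H.mul_mem hxinv hz.1, by group⟩
    · obtain ⟨n, hn, hsub⟩ := hsp.2 a ⟨haH, ha'⟩
      refine ⟨n, hn, fun z hz => ?_⟩
      obtain ⟨h, hh, hzh⟩ := mem_smul_coset.mp (hsub hz)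
      refine mem_smul_coset.mpr ⟨b * h, H.mul_mem hbH hh, ?_⟩
      rw [hzh, hx, ← mul_assoc, div_mul_cancel]
  refine ⟨part1, ?_, ?_⟩
  · -- Part 2: Lambda < Mdeg
    have hN := Nat.sInf_mem part1
    set N := Mdeg H x with hNdef
    obtain ⟨hNpos, hNsub⟩ : 0 < N ∧ nonUnits H ^ N ⊆ x • (H : Set G) := hN
    -- key: any factorization length ≥ N forces a ∈ xH
    have hkey : ∀ a ∈ H, ∀ k ∈ lengthSet H a, N ≤ k → a ∈ x • (H : Set G) := by
      rintro a haH k ⟨s, hcard, hatoms, hassoc⟩ hNk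
      have hsprod : s.prod ∈ (nonUnits H) ^ k := by
        rw [← hcard]
        refine prod_mem_pow H s fun v hv => ?_
        exact ⟨(hatoms v hv).1, fun h => (hatoms v hv).2.1 ⟨(hatoms v hv).1, h⟩⟩
      have hsub2 : (nonUnits H) ^ k ⊆ x • (H : Set G) := by
        have hsplit : (nonUnits H) ^ N * (nonUnits H) ^ (k - N) = (nonUnits H) ^ k := by
          rw [← pow_add]; congr 1; omega
        rw [← hsplit]
        rintro z ⟨p, hp, q, hq, rfl⟩
        obtain ⟨h, hh, hph⟩ := mem_smul_coset.mp (hNsub hp)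
        refine mem_smul_coset.mpr ⟨h * q, H.mul_mem hh (pow_subset_H H _ hq), ?_⟩
        show p * q = x * (h * q)
        rw [hph, mul_assoc]
      obtain ⟨h, hh, hph⟩ := mem_smul_coset.mp (hsub2 hsprod)
      obtain ⟨huH, huinv⟩ := hassoc
      refine mem_smul_coset.mpr ⟨a / s.prod * h, H.mul_mem huH hh, ?_⟩
      have hcalc : x * (a / s.prod * h) = a := by
        rw [mul_left_comm, ← hph, div_mul_cancel]
      exact hcalc.symm
    have hle : Lambda H {a : G | a ∈ H ∧ a ∉ x • (H : Set G)} ≤ ((N - 1 : ℕ) : ℕ∞) := by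
      refine iSup_le fun a => iSup_le fun haS => iSup_le fun hne => ?_
      have hmem := Nat.sInf_mem hne
      have hlt : sInf (lengthSet H a) < N := by
        by_contra hge
        exact haS.2 (hkey a haS.1 _ hmem (by omega))
      exact_mod_cast Nat.le_pred_of_lt hlt
    refine lt_of_le_of_lt hle ?_
    exact_mod_cast Nat.pred_lt hNpos.ne'
  · -- Part 3
    intro a haH hax
    have hN := Nat.sInf_mem part1
    obtain ⟨hNpos, hNsub⟩ : 0 < Mdeg H x ∧ nonUnits H ^ (Mdeg H x) ⊆ x • (H : Set G) := hN
    by_cases hainv : a⁻¹ ∈ H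
    · refine ⟨0, ⟨0, rfl, by simp, ?_⟩, hNpos⟩
      show IsHUnit H (a / Multiset.prod 0)
      rw [Multiset.prod_zero, div_one]
      exact ⟨haH, hainv⟩
    · obtain ⟨s, hatoms, hse⟩ :=
        strongly_primary_atomic H hsp (Mdeg H a) a ⟨haH, hainv⟩ rfl
      have hlen : Multiset.card s ∈ lengthSet H a := by
        refine ⟨s, rfl, hatoms, ?_⟩
        show IsHUnit H (a / s.prod)
        rw [← hse, div_self']
        exact ⟨H.one_mem, by rw [inv_one]; exact H.one_mem⟩
      refine ⟨Multiset.card s, hlen, ?_⟩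
      by_contra hge
      push_neg at hge
      apply hax
      have hsprod : s.prod ∈ (nonUnits H) ^ (Multiset.card s) := by
        refine prod_mem_pow H s fun v hv => ?_
        exact ⟨(hatoms v hv).1, fun h => (hatoms v hv).2.1 ⟨(hatoms v hv).1, h⟩⟩
      have hsplit : (nonUnits H) ^ (Mdeg H x) * (nonUnits H) ^ (Multiset.card s - Mdeg H x)
          = (nonUnits H) ^ (Multiset.card s) := by
        rw [← pow_add]; congr 1; omega
      rw [← hsplit] at hsprod
      obtain ⟨p, hp, q, hq, hpq⟩ := hsprod
      obtain ⟨h, hh, hph⟩ := mem_smul_coset.mp (hNsub hp)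
      refine mem_smul_coset.mpr ⟨h * q, H.mul_mem hh (pow_subset_H H _ hq), ?_⟩
      show a = x * (h * q)
      rw [hse, ← hpq]
      show p * q = x * (h * q)
      rw [hph, mul_assoc]
end
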